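/- (Three-level nested Gaussian identity.) Let γ₁ denote the standard Gaussian measure on ℝ. Let a, b, d ∈ ℝ, c₂, c₃ > 0, and C₂ ∈ ℝ with 1 − 2C₂a² > 0; set C₃ = (c₃/c₂)·C₂/(1 − 2C₂a²) and assume 1 − 2C₃b² > 0. Then (1/c₃) ∫_ℝ log( ∫_ℝ ( ∫_ℝ exp( C₂(ag + bh + dk)² ) dγ₁(g) )^{c₃/c₂} dγ₁(h) ) dγ₁(k) = −(1/(2c₂))·log(1 − 2C₂a²) − (1/(2c₃))·log(1 − 2C₃b²) + C₂ d² / ( c₂ (1 − 2C₂a²)(1 − 2C₃b²) ). -/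

import Mathlib

open MeasureTheory ProbabilityTheory
open scoped ENNReal NNReal

open Real in
/-- Transfer an integral against `gaussianReal 0 1` to a Lebesgue integral. -/
lemma integral_gaussianReal_std (f : ℝ → ℝ) :
    ∫ x, f x ∂(gaussianReal 0 1) = ∫ x, f x * gaussianPDFReal 0 1 x := by
  rw [gaussianReal_of_var_ne_zero 0 one_ne_zero]
  have hpdf : gaussianPDF 0 1 = fun x => ((gaussianPDFReal 0 1 x).toNNReal : ℝ≥0∞) := rfl
  rw [hpdf, integral_withDensity_eq_integral_smul
    ((measurable_gaussianPDFReal 0 1).real_toNNReal) f]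
  refine integral_congr_ae (Filter.Eventually.of_forall fun x => ?_)
  simp [NNReal.smul_def, Real.coe_toNNReal _ (gaussianPDFReal_nonneg 0 1 x), mul_comm]

open Real in
lemma integral_exp_shift (p t : ℝ) :
    ∫ x : ℝ, exp (-(p * (x - t) ^ 2)) = Real.sqrt (π / p) := by
  have h := integral_sub_right_eq_self (μ := volume) (fun x : ℝ => exp (-(p * x ^ 2))) t
  rw [h]
  simpa [neg_mul] using integral_gaussian p

open Real in
/-- Key Gaussian integral: `∫ exp (C (A g + m)²) dγ₁(g)`. -/
lemma gauss_int (C A m : ℝ) (h : 0 < 1 - 2 * C * A ^ 2) :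
    ∫ g, exp (C * (A * g + m) ^ 2) ∂(gaussianReal 0 1)
      = exp (C * m ^ 2 / (1 - 2 * C * A ^ 2)) / Real.sqrt (1 - 2 * C * A ^ 2) := by
  set s : ℝ := 1 - 2 * C * A ^ 2 with hs
  have hs0 : s ≠ 0 := ne_of_gt h
  set p : ℝ := s / 2 with hp
  have hp0 : 0 < p := by positivity
  set t : ℝ := 2 * C * A * m / s with ht
  rw [integral_gaussianReal_std]
  have key : ∀ x : ℝ, exp (C * (A * x + m) ^ 2) * gaussianPDFReal 0 1 x
      = (Real.sqrt (2 * π))⁻¹ * exp (C * m ^ 2 / s) * exp (-(p * (x - t) ^ 2)) := by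
    intro x
    rw [gaussianPDFReal]
    have hcoe : ((1 : ℝ≥0) : ℝ) = 1 := rfl
    rw [hcoe]
    have hexp : C * (A * x + m) ^ 2 + (-(x - 0) ^ 2 / (2 * 1))
        = C * m ^ 2 / s + -(p * (x - t) ^ 2) := by
      rw [hp, ht]
      field_simp
      rw [hs]
      ring
    rw [mul_comm (Real.sqrt (2 * π * 1))⁻¹ _, ← mul_assoc, ← Real.exp_add, hexp,
      Real.exp_add, mul_one]
    ring
  simp_rw [key]
  rw [integral_const_mul, integral_exp_shift]
  have h2π : (0:ℝ) < 2 * π := by positivity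
  have hsq : Real.sqrt (π / p) = Real.sqrt (2 * π) / Real.sqrt s := by
    rw [← Real.sqrt_div (by positivity)]
    congr 1
    rw [hp]; field_simp
  rw [hsq]
  have hne : Real.sqrt (2 * π) ≠ 0 := by positivity
  field_simp

open Real in
/-- Second moment of the standard Gaussian. -/
lemma integral_sq_gaussianReal_std : ∫ x, x ^ 2 ∂(gaussianReal 0 1) = 1 := by
  rw [integral_gaussianReal_std]
  have hpdf : ∀ x : ℝ, x ^ 2 * gaussianPDFReal 0 1 x
      = (Real.sqrt (2 * π))⁻¹ * (x ^ 2 * exp (-(1/2) * x ^ 2)) := by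
    intro x
    rw [gaussianPDFReal]
    have hcoe : ((1 : ℝ≥0) : ℝ) = 1 := rfl
    rw [hcoe]
    have : -(x - 0) ^ 2 / (2 * 1) = -(1/2) * x ^ 2 := by ring
    rw [this, mul_one]
    ring
  simp_rw [hpdf]
  rw [integral_const_mul]
  have heven : (∫ x : ℝ, x ^ 2 * exp (-(1/2) * x ^ 2))
      = 2 * ∫ x in Set.Ioi (0:ℝ), x ^ 2 * exp (-(1/2) * x ^ 2) := by
    rw [← integral_comp_abs (f := fun x => x ^ 2 * exp (-(1/2) * x ^ 2))]
    refine integral_congr_ae (Filter.Eventually.of_forall fun x => ?_)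
    simp [sq_abs]
  have hIoi : (∫ x in Set.Ioi (0:ℝ), x ^ 2 * exp (-(1/2) * x ^ 2))
      = ((1:ℝ)/2) ^ (-(3:ℝ)/2) * (1/2) * Real.Gamma (3/2) := by
    have := integral_rpow_mul_exp_neg_mul_rpow (p := 2) (q := 2) (b := 1/2)
      (by norm_num) (by norm_num) (by norm_num)
    have hrw : ∀ x ∈ Set.Ioi (0:ℝ), x ^ (2:ℝ) * exp (-(1/2) * x ^ (2:ℝ))
        = x ^ 2 * exp (-(1/2) * x ^ 2) := by
      intro x _
      have h1 : x ^ (2:ℝ) = x ^ (2:ℕ) := by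
        rw [show ((2:ℝ)) = ((2:ℕ) : ℝ) by norm_num, Real.rpow_natCast]
      rw [h1]
    rw [← setIntegral_congr_fun measurableSet_Ioi hrw, this]
    norm_num
  have hGamma : Real.Gamma (3/2) = Real.sqrt π / 2 := by
    have : (3:ℝ)/2 = 1/2 + 1 := by norm_num
    rw [this, Real.Gamma_add_one (by norm_num), Real.Gamma_one_half_eq]
    ring
  have hpow : ((1:ℝ)/2) ^ (-(3:ℝ)/2) = 2 * Real.sqrt 2 := by
    rw [one_div, Real.inv_rpow (by norm_num : (0:ℝ) ≤ 2), ← Real.rpow_neg (by norm_num : (0:ℝ) ≤ 2),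
      show -(-(3:ℝ)/2) = 1 + 1/2 by norm_num,
      Real.rpow_add (by norm_num) (1:ℝ) (1/2), Real.rpow_one, ← Real.sqrt_eq_rpow]
  rw [heven, hIoi, hGamma, hpow]
  have h2 : Real.sqrt (2 * π) = Real.sqrt 2 * Real.sqrt π := Real.sqrt_mul (by norm_num) π
  rw [h2]
  have hs2 : Real.sqrt 2 ≠ 0 := by positivity
  have hsπ : Real.sqrt π ≠ 0 := by positivity
  field_simp

open Real in
lemma integrable_sq_gaussianReal_std :
    Integrable (fun x : ℝ => x ^ 2) (gaussianReal 0 1) := by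
  rw [gaussianReal_of_var_ne_zero 0 one_ne_zero]
  have hpdf : gaussianPDF 0 1 = fun x => ((gaussianPDFReal 0 1 x).toNNReal : ℝ≥0∞) := rfl
  rw [hpdf, integrable_withDensity_iff_integrable_smul
    ((measurable_gaussianPDFReal 0 1).real_toNNReal)]
  have : (fun x : ℝ => ((gaussianPDFReal 0 1 x).toNNReal : ℝ≥0) • x ^ 2)
      = fun x : ℝ => (Real.sqrt (2 * π))⁻¹ * (x ^ 2 * exp (-(1/2) * x ^ 2)) := by
    funext x
    have hcoe : ((1 : ℝ≥0) : ℝ) = 1 := rfl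
    simp only [NNReal.smul_def, Real.coe_toNNReal _ (gaussianPDFReal_nonneg 0 1 x), smul_eq_mul]
    rw [gaussianPDFReal, hcoe]
    have : -(x - 0) ^ 2 / (2 * 1) = -(1/2) * x ^ 2 := by ring
    rw [this, mul_one]
    ring
  rw [this]
  refine Integrable.const_mul ?_ _
  have := integrable_rpow_mul_exp_neg_mul_sq (b := 1/2) (by norm_num) (s := 2) (by norm_num)
  refine this.congr (Filter.Eventually.of_forall fun x => ?_)
  simp only [Real.rpow_natCast]
  norm_num

/-- Three-level nested Gaussian identity: with `C₃ = (c₃/c₂)C₂/(1−2C₂a²)`,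
`(1/c₃) ∫ log (∫ (∫ e^{C₂(ag+bh+dk)²} dγ₁(g))^{c₃/c₂} dγ₁(h)) dγ₁(k)
  = −(1/(2c₂))log(1−2C₂a²) − (1/(2c₃))log(1−2C₃b²)
    + C₂d²/(c₂(1−2C₂a²)(1−2C₃b²))`. -/
theorem three_level_nested_gaussian (a b d c₂ c₃ C₂ : ℝ)
    (hc₂ : 0 < c₂) (hc₃ : 0 < c₃)
    (h₂ : 0 < 1 - 2 * C₂ * a ^ 2)
    (C₃ : ℝ) (hC₃ : C₃ = (c₃ / c₂) * C₂ / (1 - 2 * C₂ * a ^ 2))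
    (h₃ : 0 < 1 - 2 * C₃ * b ^ 2) :
    (1 / c₃) * ∫ k, Real.log (∫ h,
          (∫ g, Real.exp (C₂ * (a * g + b * h + d * k) ^ 2) ∂(gaussianReal 0 1))
            ^ (c₃ / c₂) ∂(gaussianReal 0 1)) ∂(gaussianReal 0 1)
      = -(1 / (2 * c₂)) * Real.log (1 - 2 * C₂ * a ^ 2)
        - (1 / (2 * c₃)) * Real.log (1 - 2 * C₃ * b ^ 2)
        + C₂ * d ^ 2 / (c₂ * (1 - 2 * C₂ * a ^ 2) * (1 - 2 * C₃ * b ^ 2)) := by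
  set s₂ : ℝ := 1 - 2 * C₂ * a ^ 2 with hs₂
  set s₃ : ℝ := 1 - 2 * C₃ * b ^ 2 with hs₃
  set r : ℝ := c₃ / c₂ with hr
  have hr0 : 0 < r := div_pos hc₃ hc₂
  have hs₂0 : (0:ℝ) < Real.sqrt s₂ := Real.sqrt_pos.mpr h₂
  have hs₃0 : (0:ℝ) < Real.sqrt s₃ := Real.sqrt_pos.mpr h₃
  -- Step A: inner integral over g
  have hA : ∀ m : ℝ, (∫ g, Real.exp (C₂ * (a * g + m) ^ 2) ∂(gaussianReal 0 1))
      = Real.exp (C₂ * m ^ 2 / s₂) / Real.sqrt s₂ := fun m => gauss_int C₂ a m h₂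
  -- Step B: the rpow
  have hB : ∀ m : ℝ, (Real.exp (C₂ * m ^ 2 / s₂) / Real.sqrt s₂) ^ r
      = (Real.sqrt s₂ ^ r)⁻¹ * Real.exp (C₃ * m ^ 2) := by
    intro m
    rw [Real.div_rpow (Real.exp_nonneg _) hs₂0.le, ← Real.exp_mul]
    have : C₂ * m ^ 2 / s₂ * r = C₃ * m ^ 2 := by
      rw [hC₃, hr]
      field_simp
    rw [this, div_eq_inv_mul]
  -- Step C: integral over h
  have hC : ∀ k : ℝ, (∫ h, (∫ g, Real.exp (C₂ * (a * g + b * h + d * k) ^ 2)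
        ∂(gaussianReal 0 1)) ^ r ∂(gaussianReal 0 1))
      = (Real.sqrt s₂ ^ r)⁻¹ * (Real.exp (C₃ * (d * k) ^ 2 / s₃) / Real.sqrt s₃) := by
    intro k
    have h1 : (fun h : ℝ => (∫ g, Real.exp (C₂ * (a * g + b * h + d * k) ^ 2)
          ∂(gaussianReal 0 1)) ^ r)
        = fun h : ℝ => (Real.sqrt s₂ ^ r)⁻¹ * Real.exp (C₃ * (b * h + d * k) ^ 2) := by
      funext h
      have h2 : (∫ g, Real.exp (C₂ * (a * g + b * h + d * k) ^ 2) ∂(gaussianReal 0 1))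
          = ∫ g, Real.exp (C₂ * (a * g + (b * h + d * k)) ^ 2) ∂(gaussianReal 0 1) := by
        refine integral_congr_ae (Filter.Eventually.of_forall fun g => ?_)
        ring_nf
      rw [h2, hA, hB]
    rw [h1, integral_const_mul, gauss_int C₃ b (d * k) h₃]
  -- Step D: the log
  set α : ℝ := -(r * (Real.log s₂ / 2)) - Real.log s₃ / 2 with hα
  set β : ℝ := C₃ * d ^ 2 / s₃ with hβ
  have hD : ∀ k : ℝ, Real.log (∫ h, (∫ g, Real.exp (C₂ * (a * g + b * h + d * k) ^ 2)
        ∂(gaussianReal 0 1)) ^ r ∂(gaussianReal 0 1)) = α + β * k ^ 2 := by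
    intro k
    rw [hC k, Real.log_mul (by positivity) (by positivity), Real.log_inv,
      Real.log_rpow hs₂0, Real.log_div (Real.exp_ne_zero _) (ne_of_gt hs₃0),
      Real.log_exp, Real.log_sqrt h₂.le, Real.log_sqrt h₃.le, hα, hβ]
    ring
  simp_rw [hD]
  rw [integral_add (integrable_const α) (integrable_sq_gaussianReal_std.const_mul β),
    integral_const, integral_const_mul, integral_sq_gaussianReal_std]
  simp only [measure_univ, probReal_univ, ENNReal.toReal_one, smul_eq_mul, one_mul, mul_one]
  rw [hα, hβ, hC₃, hr]
  have h₂' : s₂ ≠ 0 := ne_of_gt h₂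
  have h₃' : s₃ ≠ 0 := ne_of_gt h₃
  field_simp
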